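/- Let V be a finite type with at least 3 elements, let G be a simple graph on V, and let x ∈ V. Define the simple graph G' on V ⊕ Fin 3 by: inl u and inl w are adjacent iff G.Adj u w; inl u and inr 0 are adjacent iff G.Adj u x (so inr 0 is a non-adjacent twin of x); inl u and inr 1 are adjacent iff u = x (a pendant attached to x); inr 0 and inr 2 are adjacent (a pendant attached to the twin); and no other pairs are adjacent (adjacency is symmetric and irreflexive). Then G' has a Hamiltonian path if and only if G has a Hamiltonian cycle. -/

import Mathlib

open SimpleGraph

private lemma exists_walk_of_chain {W : Type*} {H : SimpleGraph W} :
    ∀ (l : List W) (a : W), (a :: l).Chain' H.Adj →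
      ∃ (b : W) (w : H.Walk a b), w.support = a :: l ∧ (a :: l).getLast (by simp) = b := by
  intro l
  induction l with
  | nil => exact fun a _ => ⟨a, .nil, by simp, by simp⟩
  | cons c l ih =>
    intro a hc
    rw [List.Chain', List.isChain_cons_cons] at hc
    obtain ⟨b, w, hw, hl⟩ := ih c hc.2
    exact ⟨b, .cons hc.1 w, by simp [hw], by simpa [List.getLast_cons] using hl⟩

private lemma support_pair_of_edge {W : Type*} {H : SimpleGraph W} {a b : W} (q : H.Walk a b)
    (hq : q.IsPath) (he : s(b, a) ∈ q.edges) : q.support = [a, b] := by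
  induction q with
  | nil => simp at he
  | @cons a c b h q ih =>
    rw [SimpleGraph.Walk.edges_cons, List.mem_cons] at he
    rw [SimpleGraph.Walk.cons_isPath_iff] at hq
    rcases he with he | he
    · rcases Sym2.eq_iff.mp he with ⟨-, hac⟩ | ⟨hbc, -⟩
      · exact absurd hac h.ne
      · subst hbc
        cases q with
        | nil => simp
        | cons h' q' =>
          rw [SimpleGraph.Walk.cons_isPath_iff] at hq
          exact absurd q'.end_mem_support (by simpa using hq.1.2)
    · exact absurd (q.snd_mem_support_of_mem_edges he) hq.2

private lemma chain'_endpoint {α : Type*} {R : α → α → Prop} {L : List α}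
    (hc : L.Chain' R) (hn : L.Nodup) {c d : α}
    (hcd : ∀ y, R c y → y = d) (hdc : ∀ y, R y c → y = d) (hm : c ∈ L) :
    L.head? = some c ∨ L.getLast? = some c := by
  obtain ⟨k, hk, hkc⟩ := List.mem_iff_getElem.mp hm
  rw [List.Chain', List.isChain_iff_getElem] at hc
  have hne : L ≠ [] := List.ne_nil_of_mem hm
  rcases Nat.eq_zero_or_pos k with rfl | hk0
  · left
    rw [List.head?_eq_head hne, Option.some_inj, ← hkc, List.head_eq_getElem]
  rcases eq_or_lt_of_le (Nat.succ_le_of_lt hk) with hlast | hmid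
  · right
    rw [List.getLast?_eq_getLast_of_ne_nil hne, Option.some_inj, ← hkc,
      List.getLast_eq_getElem]
    congr 1
    omega
  · exfalso
    have h1 : R (L.get ⟨k - 1, by omega⟩) (L.get ⟨k - 1 + 1, by omega⟩) := hc (k - 1) (by omega)
    have h2 : R (L.get ⟨k, by omega⟩) (L.get ⟨k + 1, by omega⟩) := hc k (by omega)
    simp only [List.get_eq_getElem] at h1 h2
    have hpred : L[k - 1] = d := by
      apply hdc
      convert h1 using 2
      exact hkc.symm.trans (by congr 1; omega)
    have hsucc : L[k + 1]'(by omega) = d := by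
      apply hcd
      convert h2 using 2
      exact hkc.symm
    have := (List.Nodup.getElem_inj_iff hn).mp (hpred.trans hsucc.symm)
    omega

private lemma all_inl {V : Type*} {l : List (V ⊕ Fin 3)}
    (h : ∀ e ∈ l, ∃ v, e = Sum.inl v) : ∃ M : List V, l = M.map Sum.inl := by
  induction l with
  | nil => exact ⟨[], rfl⟩
  | cons e l ih =>
    obtain ⟨M, hM⟩ := ih fun e' he' => h e' (List.mem_cons_of_mem _ he')
    obtain ⟨v, rfl⟩ := h e List.mem_cons_self
    exact ⟨v :: M, by simp [hM]⟩

private lemma forward_main {V : Type*} [Fintype V] [DecidableEq V] (hV : 3 ≤ Fintype.card V)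
    (G : SimpleGraph V) (x : V) (G' : SimpleGraph (V ⊕ Fin 3))
    (h1 : ∀ u w : V, G'.Adj (Sum.inl u) (Sum.inl w) ↔ G.Adj u w)
    (h2 : ∀ u : V, G'.Adj (Sum.inl u) (Sum.inr 0) ↔ G.Adj u x)
    (h3 : ∀ u : V, G'.Adj (Sum.inl u) (Sum.inr 1) ↔ u = x)
    (h4 : ∀ u : V, ¬ G'.Adj (Sum.inl u) (Sum.inr 2))
    (h5 : G'.Adj (Sum.inr 0) (Sum.inr 2))
    (h6 : ¬ G'.Adj (Sum.inr 0) (Sum.inr 1))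
    (h7 : ¬ G'.Adj (Sum.inr 1) (Sum.inr 2))
    {u : V ⊕ Fin 3} (p : G'.Walk u (Sum.inr 2)) (hH : p.IsHamiltonian) (hP : p.IsPath) :
    ∃ (u : V) (c : G.Walk u u), c.IsHamiltonianCycle := by
  classical
  have hnodup : p.support.Nodup := hP.support_nodup
  have hmem : ∀ v, v ∈ p.support := hH.mem_support
  have hchain : p.support.Chain' G'.Adj := p.isChain_adj_support
  have hlast : p.support.getLast? = some (Sum.inr 2) := by
    rw [List.getLast?_eq_getLast_of_ne_nil p.support_ne_nil]
    exact congrArg some p.getLast_support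
  -- neighbors of inr 1
  have n1 : ∀ y, G'.Adj (Sum.inr 1) y → y = Sum.inl x := by
    rintro (a | i) h
    · exact congrArg _ ((h3 a).mp h.symm)
    · exfalso
      fin_cases i
      · exact h6 h.symm
      · exact G'.irrefl h
      · exact h7 h
  have n1' : ∀ y, G'.Adj y (Sum.inr 1) → y = Sum.inl x := fun y h => n1 y h.symm
  -- inr 1 is the head
  have hhead : p.support.head? = some (Sum.inr 1) := by
    rcases chain'_endpoint hchain hnodup n1 n1' (hmem (Sum.inr 1)) with h | h
    · exact h
    · rw [hlast] at h
      simp at h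
  have hu : u = Sum.inr 1 := by
    have := p.support_eq_cons
    rw [this, List.head?_cons, Option.some_inj] at hhead
    exact hhead
  subst hu
  -- decompose the end: L = D ++ [inr 0, inr 2]
  have hKL : p.support.dropLast ++ [Sum.inr 2] = p.support :=
    List.dropLast_append_getLast? _ hlast
  have n2 : ∀ y, G'.Adj y (Sum.inr 2) → y = Sum.inr 0 := by
    rintro (a | i) h
    · exact absurd h (h4 a)
    · fin_cases i
      · rfl
      · exact absurd h h7
      · exact absurd h (G'.irrefl)
  -- head structure
  obtain ⟨T, hT⟩ : ∃ T, p.support = Sum.inr 1 :: T := ⟨p.support.tail, p.support_eq_cons⟩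
  have hTne : T ≠ [] := by
    rintro rfl
    have := hmem (Sum.inr 2)
    rw [hT] at this
    simp at this
  obtain ⟨t0, T', rfl⟩ := List.exists_cons_of_ne_nil hTne
  have ht0 : t0 = Sum.inl x := by
    have hc := hchain
    rw [hT] at hc
    exact n1 t0 (List.isChain_cons_cons.mp hc).1
  subst ht0
  -- end structure
  have hKne : p.support.dropLast ≠ [] := by
    rw [hT]
    simp
  have hlink : p.support.dropLast.getLast hKne = Sum.inr 0 := by
    have hc := hchain
    rw [← hKL] at hc
    refine n2 _ ((List.isChain_append.mp hc).2.2 _ ?_ (Sum.inr 2) rfl)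
    rw [List.getLast?_eq_getLast_of_ne_nil hKne]
    rfl
  have hD : p.support.dropLast.dropLast ++ [Sum.inr 0, Sum.inr 2] = p.support := by
    have h0 : p.support.dropLast.dropLast ++ [Sum.inr 0] = p.support.dropLast := by
      rw [← hlink]
      exact List.dropLast_append_getLast hKne
    rw [← hKL, ← h0]
    simp
  obtain ⟨D2, hD2⟩ : ∃ D2, T' = D2 ++ [Sum.inr 0, Sum.inr 2] := by
    rcases hE : p.support.dropLast.dropLast with _ | ⟨d0, E⟩
    · rw [hE, hT] at hD
      simp at hD
    · rcases hE2 : E with _ | ⟨d1, D2⟩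
      · rw [hE, hE2, hT] at hD
        simp at hD
      · rw [hE, hE2, hT] at hD
        simp only [List.cons_append, List.cons.injEq] at hD
        exact ⟨D2, hD.2.2.symm⟩
  rw [hD2] at hT
  have hsup := hT
  -- nodup pieces
  have hnd2 : (D2 ++ [Sum.inr 0, Sum.inr 2]).Nodup := by
    have := hnodup
    rw [hsup] at this
    exact (this.of_cons).of_cons
  have hdisj := List.disjoint_of_nodup_append hnd2
  have hr1 : Sum.inr 1 ∉ D2 := by
    have := hnodup
    rw [hsup] at this
    have h' := (List.nodup_cons.mp this).1
    simp only [List.mem_cons, List.mem_append] at h'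
    tauto
  have hmid : ∀ e ∈ D2, ∃ v, e = Sum.inl v := by
    rintro (a | i) he
    · exact ⟨a, rfl⟩
    · exfalso
      fin_cases i
      · exact hdisj he (by simp)
      · exact hr1 he
      · exact hdisj he (by simp)
  obtain ⟨M, rfl⟩ := all_inl hmid
  -- chain facts
  have hchain' : ((x :: M).map (Sum.inl : V → V ⊕ Fin 3) ++ [Sum.inr 0, Sum.inr 2]).Chain' G'.Adj := by
    have hc := hchain
    rw [hsup] at hc
    exact hc.tail
  obtain ⟨hc1, -, hc3⟩ := List.isChain_append.mp hchain'
  have hchainG : (x :: M).Chain' G.Adj := by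
    rw [List.isChain_map] at hc1
    exact hc1.imp fun a b hab => (h1 a b).mp hab
  have hlk : G'.Adj (Sum.inl ((x :: M).getLast (by simp))) (Sum.inr 0) := by
    apply hc3 _ ?_ (Sum.inr 0) rfl
    rw [List.getLast?_map, List.getLast?_eq_getLast_of_ne_nil (by simp)]
    rfl
  have hmemG : ∀ a : V, a ∈ x :: M := by
    intro a
    have := hmem (Sum.inl a)
    rw [hsup] at this
    simpa using this
  have hnodupG : (x :: M).Nodup := by
    have hn := hnodup
    rw [hsup] at hn
    have h2' := List.nodup_cons.mp hn.of_cons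
    refine List.nodup_cons.mpr ⟨?_, (h2'.2.of_append_left).of_map⟩
    intro hx
    exact h2'.1 (by simp [hx])
  have hlen : 3 ≤ (x :: M).length := by
    have hcard : Fintype.card V ≤ (x :: M).length :=
      calc Fintype.card V = (Finset.univ : Finset V).card := rfl
        _ ≤ (x :: M).toFinset.card :=
            Finset.card_le_card fun a _ => List.mem_toFinset.mpr (hmemG a)
        _ ≤ (x :: M).length := (x :: M).toFinset_card_le
    omega
  -- build the cycle
  obtain ⟨b, w0, hsupp0, hgl⟩ := exists_walk_of_chain M x hchainG
  have hbx : G.Adj b x := (h2 b).mp (hgl ▸ hlk)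
  have hqpath : w0.reverse.IsPath := Walk.IsPath.mk' (by
    rw [Walk.support_reverse, hsupp0]
    exact List.nodup_reverse.mpr hnodupG)
  have hedge : s(x, b) ∉ w0.reverse.edges := by
    intro hmem'
    have hsp := support_pair_of_edge w0.reverse hqpath hmem'
    have hlen2 := congrArg List.length hsp
    rw [Walk.support_reverse, hsupp0, List.length_reverse] at hlen2
    simp at hlen2 hlen
    omega
  refine ⟨x, Walk.cons hbx.symm w0.reverse, ?_⟩
  rw [Walk.isHamiltonianCycle_iff_isCycle_and_support_count_tail_eq_one]
  refine ⟨(Walk.cons_isCycle_iff _ hbx.symm).mpr ⟨hqpath, hedge⟩, ?_⟩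
  intro a
  rw [Walk.support_cons, List.tail_cons, Walk.support_reverse, hsupp0]
  rcases eq_or_ne a x with rfl | hax
  · have hxM : a ∉ M := (List.nodup_cons.mp hnodupG).1
    simp [List.count_reverse, List.count_cons, List.count_eq_zero_of_not_mem hxM]
  · have haM : a ∈ M := by
      have := hmemG a
      simp only [List.mem_cons] at this
      tauto
    simp [List.count_reverse, List.count_cons, hax.symm,
      List.count_eq_one_of_mem (List.nodup_cons.mp hnodupG).2 haM]

theorem stmt_9 {V : Type*} [Fintype V] [DecidableEq V] (hV : 3 ≤ Fintype.card V)
    (G : SimpleGraph V) (x : V) (G' : SimpleGraph (V ⊕ Fin 3))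
    (h1 : ∀ u w : V, G'.Adj (Sum.inl u) (Sum.inl w) ↔ G.Adj u w)
    (h2 : ∀ u : V, G'.Adj (Sum.inl u) (Sum.inr 0) ↔ G.Adj u x)
    (h3 : ∀ u : V, G'.Adj (Sum.inl u) (Sum.inr 1) ↔ u = x)
    (h4 : ∀ u : V, ¬ G'.Adj (Sum.inl u) (Sum.inr 2))
    (h5 : G'.Adj (Sum.inr 0) (Sum.inr 2))
    (h6 : ¬ G'.Adj (Sum.inr 0) (Sum.inr 1))
    (h7 : ¬ G'.Adj (Sum.inr 1) (Sum.inr 2)) :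
    (∃ (u w : V ⊕ Fin 3) (p : G'.Walk u w), p.IsHamiltonian ∧ p.IsPath) ↔
    (∃ (u : V) (c : G.Walk u u), c.IsHamiltonianCycle) := by
  constructor
  · rintro ⟨u, w, p, hH, hP⟩
    have n2 : ∀ y, G'.Adj (Sum.inr 2) y → y = Sum.inr 0 := by
      rintro (a | i) h
      · exact absurd h.symm (h4 a)
      · fin_cases i
        · rfl
        · exact absurd h.symm h7
        · exact absurd h (G'.irrefl)
    have n2' : ∀ y, G'.Adj y (Sum.inr 2) → y = Sum.inr 0 := fun y h => n2 y h.symm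
    rcases chain'_endpoint p.isChain_adj_support hP.support_nodup n2 n2'
      (hH.mem_support (Sum.inr 2)) with h | h
    · have hu : u = Sum.inr 2 := by
        rw [p.support_eq_cons, List.head?_cons, Option.some_inj] at h
        exact h
      subst hu
      refine forward_main hV G x G' h1 h2 h3 h4 h5 h6 h7 p.reverse
        (hP.reverse.isHamiltonian_of_mem ?_) hP.reverse
      intro v
      rw [Walk.support_reverse, List.mem_reverse]
      exact hH.mem_support v
    · have hw : w = Sum.inr 2 := by
        rw [List.getLast?_eq_getLast_of_ne_nil p.support_ne_nil, Option.some_inj] at h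
        rw [← p.getLast_support]
        exact h
      subst hw
      exact forward_main hV G x G' h1 h2 h3 h4 h5 h6 h7 p hH hP
  · rintro ⟨u, c, hc⟩
    have hx : x ∈ c.support := hc.mem_support x
    have hrot : (c.rotate x hx).IsHamiltonianCycle := by
      rw [Walk.isHamiltonianCycle_iff_isCycle_and_support_count_tail_eq_one]
      refine ⟨hc.isCycle.rotate hx, ?_⟩
      intro a
      rw [(Walk.support_rotate c x hx).perm.count_eq]
      exact (Walk.isHamiltonianCycle_iff_isCycle_and_support_count_tail_eq_one.mp hc).2 a
    obtain ⟨y, hxy, q, hq⟩ := Walk.not_nil_iff.mp hrot.isCycle.not_nil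
    rw [hq] at hrot
    have hqcount : ∀ a, q.support.count a = 1 := by
      intro a
      have := (Walk.isHamiltonianCycle_iff_isCycle_and_support_count_tail_eq_one.mp hrot).2 a
      simpa using this
    have hqmem : ∀ a, a ∈ q.support := fun a =>
      List.count_pos_iff.mp (by rw [hqcount a]; norm_num)
    have hqnodup : q.support.Nodup :=
      List.nodup_iff_count_le_one.mpr fun a => le_of_eq (hqcount a)
    let f : G →g G' := ⟨Sum.inl, fun {a b} hab => (h1 a b).mpr hab⟩
    have hy0 : G'.Adj (Sum.inl y) (Sum.inr 0) := (h2 y).mpr hxy.symm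
    have hr1 : G'.Adj (Sum.inr 1) (Sum.inl x) := ((h3 x).mpr rfl).symm
    set P : G'.Walk (Sum.inr 1) (Sum.inr 2) :=
      Walk.cons hr1 (((q.map f).reverse).append (Walk.cons hy0 (Walk.cons h5 Walk.nil)))
      with hPdef
    have hsup : P.support
        = Sum.inr 1 :: ((q.support.map Sum.inl).reverse ++ [Sum.inr 0, Sum.inr 2]) := by
      simp only [hPdef, Walk.support_cons, Walk.support_append, Walk.support_reverse,
        Walk.support_map, List.tail_cons]
      rfl
    have hnd : P.support.Nodup := by
      rw [hsup]
      refine List.nodup_cons.mpr ⟨by simp, ?_⟩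
      rw [List.nodup_append]
      refine ⟨List.nodup_reverse.mpr (hqnodup.map fun a b h => Sum.inl.inj h), by simp, ?_⟩
      intro a ha
      rw [List.mem_reverse, List.mem_map] at ha
      obtain ⟨v, -, rfl⟩ := ha
      simp
    have hpath : P.IsPath := Walk.IsPath.mk' hnd
    refine ⟨Sum.inr 1, Sum.inr 2, P, hpath.isHamiltonian_of_mem ?_, hpath⟩
    intro v
    rw [hsup]
    rcases v with a | i
    · simp [hqmem a]
    · fin_cases i <;> simp
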